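/- For the zero-inflated negative binomial GAS model with unit scaling, the score at observation 0 is uniformly bounded in f: for all f ∈ ℝ, α > 0, π ∈ [0,1), |(π − 1)·exp(f)/((α·exp(f) + 1)(1 + π(α·exp(f) + 1)^(1/α) − π))| ≤ (1 − π)/α. -/
import Mathlib


theorem zinb_score_zero_bound (f α π : ℝ) (hα : 0 < α)
    (hπ : π ∈ Set.Ico (0 : ℝ) 1) :
    |(π - 1) * Real.exp f /
      ((α * Real.exp f + 1) * (1 + π * (α * Real.exp f + 1) ^ (1 / α : ℝ) - π))|
      ≤ (1 - π) / α := by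
  obtain ⟨hπ0, hπ1⟩ := hπ
  set x := Real.exp f with hxdef
  have hx : 0 < x := Real.exp_pos f
  have hA1 : (1 : ℝ) ≤ α * x + 1 := by nlinarith
  have hA : 0 < α * x + 1 := by linarith
  have hpow : (1 : ℝ) ≤ (α * x + 1) ^ (1 / α : ℝ) :=
    Real.one_le_rpow hA1 (by positivity)
  have hB : (1 : ℝ) ≤ 1 + π * (α * x + 1) ^ (1 / α : ℝ) - π := by nlinarith
  have hB0 : 0 < 1 + π * (α * x + 1) ^ (1 / α : ℝ) - π := by linarith
  set D := (α * x + 1) * (1 + π * (α * x + 1) ^ (1 / α : ℝ) - π) with hDdef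
  have hD0 : 0 < D := mul_pos hA hB0
  have hDge : α * x + 1 ≤ D := by
    have := mul_le_mul_of_nonneg_left hB (le_of_lt hA)
    simpa [hDdef, mul_one] using this
  rw [abs_div, abs_mul, abs_of_nonpos (by linarith : π - 1 ≤ 0),
    abs_of_pos hx, abs_of_pos hD0]
  rw [div_le_div_iff₀ hD0 hα]
  have h1 : (1 - π) * x * α = (1 - π) * (α * x) := by ring
  nlinarith [mul_le_mul_of_nonneg_left hDge (by linarith : (0:ℝ) ≤ 1 - π)]
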